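/- (Brieskorn–Hamm rational homology spheres, case (i).) Let n ≥ 3, let p₁,…,p_n ≥ 2 be pairwise coprime integers, and let m ≥ 1 be an integer with gcd(m, pᵢ) = 1 for every i ≥ 3; set P := p₁⋯p_n. Let ω₁, ω₂ and ωᵢ (3 ≤ i ≤ n) be the unique integers with 0 < ωᵢ < pᵢ satisfying ω₁·(P/p₁) ≡ −1 (mod p₁), ω₂·(P/p₂) ≡ −1 (mod p₂), and ωᵢ·(mP/pᵢ) ≡ −1 (mod pᵢ) for i ≥ 3, and let b₀ := 1/P + ω₁/p₁ + ω₂/p₂ + m·Σ_{i=3}^n ωᵢ/pᵢ (which is a positive integer). Consider the Seifert data with d = 2 + (n−2)m legs consisting of (p₁,ω₁), (p₂,ω₂), and m copies of (pᵢ,ωᵢ) for each 3 ≤ i ≤ n, and let N(ℓ) := b₀·ℓ − ⌈ℓω₁/p₁⌉ − ⌈ℓω₂/p₂⌉ − m·Σ_{i=3}^n ⌈ℓωᵢ/pᵢ⌉. Then the numerical semigroup 𝒮 = {ℓ ∈ ℤ≥0 : N(ℓ) ≥ 0} has minimal system of generators {P/p₁, P/p₂} ∪ {m·P/pᵢ :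 3 ≤ i ≤ n}; in particular 𝒮 is the additive submonoid of ℤ≥0 generated by these elements. -/

import Mathlib

lemma mul_ceil_eq (a b : ℤ) (hb : 0 < b) :
    b * ⌈(a : ℚ) / (b : ℚ)⌉ = a + (-a) % b := by
  have h1 : ⌈(a : ℚ) / (b : ℚ)⌉ = -⌊((-a : ℤ) : ℚ) / (b : ℚ)⌋ := by
    rw [← Int.ceil_neg]
    congr 1
    push_cast
    ring
  have hbt : ((b.toNat : ℕ) : ℤ) = b := Int.toNat_of_nonneg hb.le
  have h2 : ⌊((-a : ℤ) : ℚ) / (b : ℚ)⌋ = (-a) / b := by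
    rw [← hbt]
    push_cast
    exact Rat.floor_intCast_div_natCast (-a) b.toNat
  rw [h1, h2]
  linarith [Int.emod_def (-a) b]

/-- Brieskorn–Hamm rational homology spheres, case (i): the semigroup `𝒮_M` of
`Σ(mp₁, mp₂, p₃, …, p_n)` has minimal system of generators
`{P/p₁, P/p₂} ∪ {m·P/pᵢ : 3 ≤ i ≤ n}` (generators indexed by `Fin n` with
`i < 2` corresponding to the first two and `i ≥ 2` to the rest). -/
theorem stmt_19
    (n : ℕ) (hn : 3 ≤ n)
    (p : Fin n → ℤ) (hp2 : ∀ i, 2 ≤ p i)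
    (hpcop : ∀ i j, i ≠ j → IsCoprime (p i) (p j))
    (m : ℤ) (hm : 1 ≤ m)
    (hmcop : ∀ i : Fin n, 2 ≤ (i : ℕ) → IsCoprime m (p i))
    (P : ℤ) (hP : P = ∏ i, p i)
    (ω : Fin n → ℤ) (hω : ∀ i, 0 < ω i ∧ ω i < p i)
    (hω12 : ∀ i : Fin n, (i : ℕ) < 2 → p i ∣ ω i * (P / p i) + 1)
    (hω3 : ∀ i : Fin n, 2 ≤ (i : ℕ) → p i ∣ ω i * (m * (P / p i)) + 1)
    (b₀ : ℤ)
    (hb₀ : (b₀ : ℚ) = 1 / (P : ℚ) +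
      ∑ i : Fin n, (if (i : ℕ) < 2 then 1 else (m : ℚ)) * ((ω i : ℚ) / (p i : ℚ)))
    (N : ℤ → ℤ)
    (hN : ∀ ℓ : ℤ, N ℓ = b₀ * ℓ -
      ∑ i : Fin n, (if (i : ℕ) < 2 then 1 else m) * ⌈((ℓ * ω i : ℤ) : ℚ) / ((p i : ℤ) : ℚ)⌉)
    (G : Set ℤ)
    (hG : G = {g : ℤ | ∃ i : Fin n,
      ((i : ℕ) < 2 ∧ g = P / p i) ∨ (2 ≤ (i : ℕ) ∧ g = m * (P / p i))}) :
    {ℓ : ℤ | 0 ≤ N ℓ} = ↑(AddSubmonoid.closure G)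
    ∧ ∀ g ∈ G, g ∉ AddSubmonoid.closure (G \ {g}) := by
  have hppos : ∀ i, 0 < p i := fun i => by linarith [hp2 i]
  have hpne : ∀ i, (p i : ℚ) ≠ 0 := fun i => by
    exact_mod_cast (hppos i).ne'
  obtain ⟨Q, hQ⟩ : ∃ Q : Fin n → ℤ, ∀ i, Q i = ∏ j ∈ Finset.univ.erase i, p j :=
    ⟨_, fun _ => rfl⟩
  have hPQ : ∀ i, P = p i * Q i := by
    intro i
    rw [hP, hQ, Finset.mul_prod_erase _ _ (Finset.mem_univ i)]
  have hdivQ : ∀ i, P / p i = Q i := fun i => by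
    rw [hPQ i, Int.mul_ediv_cancel_left _ (hppos i).ne']
  have hPpos : 0 < P := by
    rw [hP]; exact Finset.prod_pos (fun i _ => hppos i)
  have hPQne : (P : ℚ) ≠ 0 := by exact_mod_cast hPpos.ne'
  have hdvdQ : ∀ i j : Fin n, i ≠ j → p i ∣ Q j := by
    intro i j hij
    rw [hQ]
    exact Finset.dvd_prod_of_mem _ (Finset.mem_erase.mpr ⟨hij, Finset.mem_univ i⟩)
  have hcopQ : ∀ i, IsCoprime (p i) (Q i) := by
    intro i
    rw [hQ]
    exact IsCoprime.prod_right fun j hj =>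
      hpcop i j (Finset.ne_of_mem_erase hj).symm
  obtain ⟨gen, hgen⟩ : ∃ gen : Fin n → ℤ,
      ∀ i, gen i = if (i : ℕ) < 2 then Q i else m * Q i := ⟨_, fun _ => rfl⟩
  -- integer form of b₀
  have hQrat : (b₀ : ℚ) * P
      = 1 + ∑ i : Fin n, (if (i : ℕ) < 2 then (1 : ℚ) else m) * ((ω i : ℚ) * (Q i : ℚ)) := by
    rw [hb₀, add_mul, Finset.sum_mul, one_div, inv_mul_cancel₀ hPQne]
    congr 1
    apply Finset.sum_congr rfl
    intro i _
    have hPc : (P : ℚ) = (p i : ℚ) * (Q i : ℚ) := by exact_mod_cast hPQ i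
    rw [hPc]
    split_ifs
    · linear_combination ((ω i : ℚ) * (Q i : ℚ)) * mul_inv_cancel₀ (hpne i)
    · linear_combination ((m : ℚ) * (ω i : ℚ) * (Q i : ℚ)) * mul_inv_cancel₀ (hpne i)
  have hb₀P : b₀ * P = 1 + ∑ i : Fin n, (if (i : ℕ) < 2 then (1 : ℤ) else m) * (ω i * Q i) := by
    refine Int.cast_injective (α := ℚ) ?_
    push_cast
    rw [hQrat]
  -- ceiling times P
  have hceil : ∀ (ℓ : ℤ) (i : Fin n),
      ⌈((ℓ * ω i : ℤ) : ℚ) / ((p i : ℤ) : ℚ)⌉ * P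
        = (ℓ * ω i + (-(ℓ * ω i)) % p i) * Q i := by
    intro ℓ i
    have h := mul_ceil_eq (ℓ * ω i) (p i) (hppos i)
    rw [hPQ i, show ⌈((ℓ * ω i : ℤ) : ℚ) / ((p i : ℤ) : ℚ)⌉ * (p i * Q i)
      = (p i * ⌈((ℓ * ω i : ℤ) : ℚ) / ((p i : ℤ) : ℚ)⌉) * Q i from by ring, h]
  -- key identity
  have hNP : ∀ ℓ : ℤ, N ℓ * P = ℓ - ∑ i, ((-(ℓ * ω i)) % p i) * gen i := by
    intro ℓ
    have hper : ∀ i : Fin n, i ∈ Finset.univ →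
        (if (i : ℕ) < 2 then (1:ℤ) else m) * ⌈((ℓ * ω i : ℤ) : ℚ) / ((p i : ℤ) : ℚ)⌉ * P
        = ℓ * ((if (i : ℕ) < 2 then (1:ℤ) else m) * (ω i * Q i))
          + ((-(ℓ * ω i)) % p i) * gen i := by
      intro i _
      rw [mul_assoc, hceil ℓ i, hgen i]
      split_ifs <;> ring
    rw [hN ℓ, sub_mul, Finset.sum_mul, Finset.sum_congr rfl hper,
      Finset.sum_add_distrib, ← Finset.mul_sum]
    linear_combination ℓ * hb₀P
  -- generators are in G
  have hgenG : ∀ i, gen i ∈ G := by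
    intro i
    rw [hG]
    refine ⟨i, ?_⟩
    by_cases h : (i : ℕ) < 2
    · exact Or.inl ⟨h, by rw [hgen i, if_pos h, hdivQ i]⟩
    · exact Or.inr ⟨by omega, by rw [hgen i, if_neg h, hdivQ i]⟩
  -- N vanishes on generators
  have hNgen : ∀ i, N (gen i) = 0 := by
    intro i
    have h0 : ∀ j : Fin n, j ∈ Finset.univ → j ≠ i →
        ((-(gen i * ω j)) % p j) * gen j = 0 := by
      intro j _ hji
      have hpg : p j ∣ gen i := by
        rw [hgen i]
        by_cases h : (i : ℕ) < 2
        · rw [if_pos h]; exact hdvdQ j i hji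
        · rw [if_neg h]; exact (hdvdQ j i hji).mul_left m
      apply mul_eq_zero.mpr
      left
      exact Int.emod_eq_zero_of_dvd (dvd_neg.mpr (hpg.mul_right _))
    have hr : (-(gen i * ω i)) % p i = 1 := by
      have hd : p i ∣ -(gen i * ω i) - 1 := by
        by_cases h : (i : ℕ) < 2
        · have hx := hω12 i h
          rw [hdivQ i] at hx
          rw [show -(gen i * ω i) - 1 = -(ω i * Q i + 1) from by
            rw [hgen i, if_pos h]; ring]
          exact dvd_neg.mpr hx
        · have hx := hω3 i (by omega)
          rw [hdivQ i] at hx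
          rw [show -(gen i * ω i) - 1 = -(ω i * (m * Q i) + 1) from by
            rw [hgen i, if_neg h]; ring]
          exact dvd_neg.mpr hx
      obtain ⟨k, hk⟩ := hd
      have hrew : -(gen i * ω i) = 1 + p i * k := by linarith
      rw [hrew, Int.add_mul_emod_self_left,
        Int.emod_eq_of_lt (by norm_num) (by linarith [hp2 i])]
    have hsum : ∑ j, ((-(gen i * ω j)) % p j) * gen j = gen i := by
      rw [Finset.sum_eq_single_of_mem i (Finset.mem_univ i) h0, hr, one_mul]
    have h0' : N (gen i) * P = 0 := by rw [hNP, hsum, sub_self]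
    exact (mul_eq_zero.mp h0').resolve_right hPpos.ne'
  have hzero : N 0 = 0 := by
    rw [hN 0]
    simp
  have hadd : ∀ a b : ℤ, 0 ≤ N a → 0 ≤ N b → 0 ≤ N (a + b) := by
    intro a b ha hb
    have hsum : ∑ i : Fin n, (if (i : ℕ) < 2 then (1:ℤ) else m)
          * ⌈(((a + b) * ω i : ℤ) : ℚ) / ((p i : ℤ) : ℚ)⌉
        ≤ (∑ i : Fin n, (if (i : ℕ) < 2 then (1:ℤ) else m)
            * ⌈((a * ω i : ℤ) : ℚ) / ((p i : ℤ) : ℚ)⌉)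
          + ∑ i : Fin n, (if (i : ℕ) < 2 then (1:ℤ) else m)
            * ⌈((b * ω i : ℤ) : ℚ) / ((p i : ℤ) : ℚ)⌉ := by
      rw [← Finset.sum_add_distrib]
      apply Finset.sum_le_sum
      intro i _
      have hcnn : (0 : ℤ) ≤ if (i : ℕ) < 2 then (1:ℤ) else m := by
        split_ifs
        · norm_num
        · linarith
      have hsplit : (((a + b) * ω i : ℤ) : ℚ) / ((p i : ℤ) : ℚ)
          = ((a * ω i : ℤ) : ℚ) / ((p i : ℤ) : ℚ)
            + ((b * ω i : ℤ) : ℚ) / ((p i : ℤ) : ℚ) := by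
        push_cast
        rw [← add_div]
        ring_nf
      calc (if (i : ℕ) < 2 then (1:ℤ) else m)
            * ⌈(((a + b) * ω i : ℤ) : ℚ) / ((p i : ℤ) : ℚ)⌉
          ≤ (if (i : ℕ) < 2 then (1:ℤ) else m)
            * (⌈((a * ω i : ℤ) : ℚ) / ((p i : ℤ) : ℚ)⌉
              + ⌈((b * ω i : ℤ) : ℚ) / ((p i : ℤ) : ℚ)⌉) := by
            apply mul_le_mul_of_nonneg_left _ hcnn
            rw [hsplit]
            exact Int.ceil_add_le _ _
        _ = (if (i : ℕ) < 2 then (1:ℤ) else m)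
              * ⌈((a * ω i : ℤ) : ℚ) / ((p i : ℤ) : ℚ)⌉
            + (if (i : ℕ) < 2 then (1:ℤ) else m)
              * ⌈((b * ω i : ℤ) : ℚ) / ((p i : ℤ) : ℚ)⌉ := by ring
    have ea := hN a; have eb := hN b; have eab := hN (a + b)
    have hmul' : b₀ * (a + b) = b₀ * a + b₀ * b := by ring
    linarith
  set S' : AddSubmonoid ℤ :=
    { carrier := {ℓ : ℤ | 0 ≤ N ℓ}
      zero_mem' := by simp [hzero]
      add_mem' := fun {a b} ha hb => hadd a b ha hb } with hS'
  have hGS' : G ⊆ ↑S' := by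
    intro g hg
    rw [hG] at hg
    obtain ⟨i, hi⟩ := hg
    have hg' : g = gen i := by
      rcases hi with ⟨h1, h2⟩ | ⟨h1, h2⟩
      · rw [h2, hdivQ i, hgen i, if_pos h1]
      · rw [h2, hdivQ i, hgen i, if_neg (by omega)]
    show 0 ≤ N g
    rw [hg', hNgen i]
  have hmul : ∀ (k x : ℤ), 0 ≤ k → x ∈ AddSubmonoid.closure G →
      k * x ∈ AddSubmonoid.closure G := by
    intro k x hk hx
    rw [show k * x = k.toNat • x from by
      rw [nsmul_eq_mul, Int.toNat_of_nonneg hk]]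
    exact nsmul_mem hx _
  have hPclos : P ∈ AddSubmonoid.closure G := by
    obtain ⟨i0, hi0⟩ : ∃ i : Fin n, (i : ℕ) < 2 :=
      ⟨⟨0, by omega⟩, Nat.zero_lt_two⟩
    have hrep : P = p i0 * gen i0 := by
      rw [hgen i0, if_pos hi0]
      exact hPQ i0
    rw [hrep]
    exact hmul _ _ (by linarith [hp2 i0]) (AddSubmonoid.subset_closure (hgenG i0))
  constructor
  · ext ℓ
    simp only [Set.mem_setOf_eq, SetLike.mem_coe]
    constructor
    · intro hℓ
      have hkey := hNP ℓ
      have hrep : ℓ = N ℓ * P + ∑ i, ((-(ℓ * ω i)) % p i) * gen i := by linarith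
      rw [hrep]
      apply AddSubmonoid.add_mem
      · exact hmul _ _ hℓ hPclos
      · apply AddSubmonoid.sum_mem
        intro i _
        exact hmul _ _ (Int.emod_nonneg _ (hppos i).ne')
          (AddSubmonoid.subset_closure (hgenG i))
    · intro hℓ
      exact (AddSubmonoid.closure_le.mpr hGS') hℓ
  · intro g hg hgmem
    rw [hG] at hg
    obtain ⟨i, hi⟩ := hg
    set D : AddSubmonoid ℤ :=
      { carrier := {x : ℤ | p i ∣ x}
        zero_mem' := dvd_zero _
        add_mem' := fun {a b} ha hb => dvd_add ha hb } with hD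
    have hle : AddSubmonoid.closure (G \ {g}) ≤ D := by
      apply AddSubmonoid.closure_le.mpr
      intro h hh
      obtain ⟨hhG, hne⟩ := hh
      rw [hG] at hhG
      obtain ⟨j, hj⟩ := hhG
      show p i ∣ h
      by_cases hji : j = i
      · subst hji
        exfalso
        apply hne
        show h = g
        rcases hj with ⟨h1, h2⟩ | ⟨h1, h2⟩ <;> rcases hi with ⟨h1', h2'⟩ | ⟨h1', h2'⟩ <;>
          first | omega | rw [h2, h2']
      · have hdv : p i ∣ Q j := hdvdQ i j (fun h => hji h.symm)
        rw [hdivQ j] at hj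
        rcases hj with ⟨_, h2⟩ | ⟨_, h2⟩
        · rw [h2]; exact hdv
        · rw [h2]; exact hdv.mul_left m
    have hpg : p i ∣ g := hle hgmem
    have hcop : IsCoprime (p i) g := by
      rcases hi with ⟨h1, h2⟩ | ⟨h1, h2⟩
      · rw [h2, hdivQ i]; exact hcopQ i
      · rw [h2, hdivQ i]
        exact (hmcop i h1).symm.mul_right (hcopQ i)
    have : IsUnit (p i) := hcop.isUnit_of_dvd' dvd_rfl hpg
    rcases Int.isUnit_iff.mp this with h | h <;> linarith [hp2 i]
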